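/- Let F : ℝ → ℝ be twice continuously differentiable on a neighborhood of 0 with F(0) = 1, F'(0) = 0, F''(0) < 0, and F(y) < 1 for all y ≠ 0 in that neighborhood. Define g by g(y) = arcsin(F(y)) for y < 0, g(0) = π/2, and g(y) = π − arcsin(F(y)) for y > 0. Then g is differentiable at 0 with derivative g'(0) = √(−F''(0)). -/

import Mathlib

open Real Filter Set Topology

/-- Appendix: the piecewise function `g` built from `arcsin ∘ F`
is differentiable at `0` with derivative `√(−F''(0))`. -/
theorem stmt_14 (F g : ℝ → ℝ) (s : Set ℝ) (hs : s ∈ nhds (0:ℝ))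
    (hF : ContDiffOn ℝ 2 F s) (hF0 : F 0 = 1) (hF1 : deriv F 0 = 0)
    (hF2 : deriv (deriv F) 0 < 0) (hFlt : ∀ y ∈ s, y ≠ 0 → F y < 1)
    (hg : ∀ y, g y = if y < 0 then Real.arcsin (F y)
        else if y = 0 then Real.pi/2 else Real.pi - Real.arcsin (F y)) :
    HasDerivAt g (Real.sqrt (-(deriv (deriv F) 0))) 0 := by
  have hca : ContDiffAt ℝ 2 F 0 := hF.contDiffAt hs
  set c : ℝ := -(deriv (deriv F) 0) with hcdef
  have hc : 0 < c := by simp only [hcdef]; linarith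
  have hcontF : ContinuousAt F 0 := hca.continuousAt
  have hFt : Tendsto F (𝓝 0) (𝓝 1) := by
    have := hcontF.tendsto; rwa [hF0] at this
  -- second derivative of F at 0
  have hD2 : HasDerivAt (deriv F) (deriv (deriv F) 0) 0 := by
    have hD1 : ContDiffAt ℝ 1 (deriv F) 0 := by
      have h := (hca.fderiv_right (m := 1) (by norm_num)).clm_apply
        (contDiffAt_const (c := (1:ℝ)))
      simpa only [fderiv_apply_one_eq_deriv] using h
    exact (hD1.differentiableAt (by norm_num)).hasDerivAt
  have hslope1 : Tendsto (fun y => deriv F y / y) (𝓝[≠] (0:ℝ)) (𝓝 (-c)) := by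
    rw [hasDerivAt_iff_tendsto_slope] at hD2
    have : deriv (deriv F) 0 = -c := by rw [hcdef]; ring
    rw [this] at hD2
    apply hD2.congr
    intro y
    simp [slope_def_field, hF1]
  -- eventual differentiability of F
  have hdiffF : ∀ᶠ y in 𝓝 (0:ℝ), HasDerivAt F (deriv F y) y := by
    have hev : ∀ᶠ y in 𝓝 (0:ℝ), ContDiffAt ℝ 2 F y := hca.eventually (by norm_num)
    exact hev.mono fun y hy => (hy.differentiableAt (by norm_num)).hasDerivAt
  -- L'Hopital : (1 - F y) / y^2 → c/2
  have hQ : Tendsto (fun y => (1 - F y) / y^2) (𝓝[≠] (0:ℝ)) (𝓝 (c/2)) := by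
    apply HasDerivAt.lhopital_zero_nhdsNE
      (f' := fun y => -(deriv F y)) (g' := fun y => 2*y)
    · exact (hdiffF.mono fun y hy => hy.const_sub 1).filter_mono nhdsWithin_le_nhds
    · filter_upwards with y
      simpa using hasDerivAt_pow 2 y
    · filter_upwards [self_mem_nhdsWithin] with y hy
      simpa using Set.mem_compl_iff _ _ |>.1 hy
    · have : Tendsto (fun y => 1 - F y) (𝓝 (0:ℝ)) (𝓝 (1 - 1)) :=
        tendsto_const_nhds.sub hFt
      simpa using this.mono_left nhdsWithin_le_nhds
    · have : Tendsto (fun y : ℝ => y^2) (𝓝 0) (𝓝 (0^2)) := (continuous_pow 2).tendsto 0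
      simpa using this.mono_left nhdsWithin_le_nhds
    · have h := hslope1.div_const (-2)
      have he : (fun y => deriv F y / y / (-2)) = fun y => -(deriv F y) / (2*y) := by
        funext y; ring
      have hv : -c / (-2) = c / 2 := by ring
      rw [he, hv] at h; exact h
  -- (1 - F y ^2)/y^2 → c
  have h1F : Tendsto (fun y => 1 + F y) (𝓝[≠] (0:ℝ)) (𝓝 2) := by
    have : Tendsto (fun y => 1 + F y) (𝓝 (0:ℝ)) (𝓝 (1 + 1)) := tendsto_const_nhds.add hFt
    simpa [one_add_one_eq_two] using this.mono_left nhdsWithin_le_nhds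
  have hR : Tendsto (fun y => (1 - (F y)^2) / y^2) (𝓝[≠] (0:ℝ)) (𝓝 c) := by
    have h := hQ.mul h1F
    have he : (fun y => (1 - F y) / y^2 * (1 + F y)) = fun y => (1 - (F y)^2) / y^2 := by
      funext y; ring
    have hv : c/2 * 2 = c := by ring
    rw [he, hv] at h; exact h
  -- eventual facts
  have hEv : ∀ᶠ y in 𝓝[≠] (0:ℝ), 0 < F y ∧ F y < 1 := by
    have h1 : ∀ᶠ y in 𝓝 (0:ℝ), 0 < F y := hFt.eventually (eventually_gt_nhds one_pos)
    have h2 : ∀ᶠ y in 𝓝[≠] (0:ℝ), y ∈ s := mem_nhdsWithin_of_mem_nhds hs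
    filter_upwards [h1.filter_mono nhdsWithin_le_nhds, h2, self_mem_nhdsWithin]
      with y hy1 hy2 hy3
    exact ⟨hy1, hFlt y hy2 hy3⟩
  -- sqrt(1 - F y^2)/|y| → sqrt c
  have hS : Tendsto (fun y => Real.sqrt (1 - (F y)^2) / |y|) (𝓝[≠] (0:ℝ)) (𝓝 (Real.sqrt c)) := by
    have h := (Real.continuous_sqrt.tendsto c).comp hR
    apply h.congr'
    filter_upwards [self_mem_nhdsWithin, hEv] with y hy hy2
    have hnum : (0:ℝ) ≤ 1 - (F y)^2 := by nlinarith [hy2.1, hy2.2]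
    simp only [Function.comp]
    rw [Real.sqrt_div hnum, Real.sqrt_sq_eq_abs]
  -- arccos composition
  have hAt : Tendsto (fun y => Real.arccos (F y)) (𝓝[≠] (0:ℝ)) (𝓝[≠] 0) := by
    rw [tendsto_nhdsWithin_iff]
    constructor
    · have := (Real.continuous_arccos.tendsto 1).comp hFt
      simpa [Real.arccos_one, Function.comp_def] using this.mono_left nhdsWithin_le_nhds
    · filter_upwards [hEv] with y hy
      exact (ne_of_gt (Real.arccos_pos.2 hy.2))
  have hsin : Tendsto (fun t : ℝ => t / Real.sin t) (𝓝[≠] 0) (𝓝 1) := by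
    have h : Tendsto (fun t : ℝ => Real.sin t / t) (𝓝[≠] 0) (𝓝 1) := by
      have h0 := Real.hasDerivAt_sin 0
      rw [hasDerivAt_iff_tendsto_slope] at h0
      rw [Real.cos_zero] at h0
      apply h0.congr
      intro t
      simp [slope_def_field]
    have h2 := h.inv₀ one_ne_zero
    simpa [inv_div] using h2
  have hT : Tendsto (fun y => Real.arccos (F y) / Real.sin (Real.arccos (F y)))
      (𝓝[≠] (0:ℝ)) (𝓝 1) := hsin.comp hAt
  -- main limit : arccos (F y) / |y| → sqrt c
  have hMain : Tendsto (fun y => Real.arccos (F y) / |y|) (𝓝[≠] (0:ℝ)) (𝓝 (Real.sqrt c)) := by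
    have h := hT.mul hS
    rw [one_mul] at h
    apply h.congr'
    filter_upwards [hEv] with y hy
    have hlt : Real.arccos (F y) < π := by
      refine (Real.arccos_le_pi _).lt_of_ne fun h => ?_
      have := Real.arccos_eq_pi.1 h
      linarith [hy.1]
    have hpos : 0 < Real.sin (Real.arccos (F y)) :=
      Real.sin_pos_of_pos_of_lt_pi (Real.arccos_pos.2 hy.2) hlt
    rw [Real.sin_arccos]
    rw [Real.sin_arccos] at hpos
    rw [div_mul_div_comm, mul_comm (Real.sqrt (1 - F y ^ 2)) |y|,
      mul_div_mul_right _ _ (ne_of_gt hpos)]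
  -- conclude
  rw [hasDerivAt_iff_tendsto_slope]
  show Tendsto (slope g 0) (𝓝[≠] (0:ℝ)) (𝓝 (Real.sqrt c))
  apply hMain.congr'
  filter_upwards [self_mem_nhdsWithin] with y hy
  have hy0 : y ≠ 0 := hy
  have hg0 : g 0 = π / 2 := by simp [hg 0]
  have harcsin : Real.arcsin (F y) = π / 2 - Real.arccos (F y) :=
    Real.arcsin_eq_pi_div_two_sub_arccos _
  rcases lt_or_gt_of_ne hy0 with h | h
  · have hgy : g y = π / 2 - Real.arccos (F y) := by rw [hg y, if_pos h, harcsin]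
    rw [slope_def_field, hgy, hg0, abs_of_neg h, sub_zero]
    have he : π / 2 - Real.arccos (F y) - π / 2 = -Real.arccos (F y) := by ring
    rw [he, neg_div, div_neg]
  · have hgy : g y = π / 2 + Real.arccos (F y) := by
      rw [hg y, if_neg (not_lt.2 h.le), if_neg hy0, harcsin]; ring
    rw [slope_def_field, hgy, hg0, abs_of_pos h, sub_zero]
    congr 1
    ring
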